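/- Let R be a commutative ring, P a prime ideal of R, and ∂₁,...,∂ᵣ derivations of R whose R-span is closed under Lie bracket. Define ord(f) = inf{ |I| : ∂_I(f) ∉ P } ∈ ℕ ∪ {∞}. Then for all f, g ∈ R with ord(f) = n < ∞ and ord(g) = m < ∞, one has ord(fg) = n + m. -/

import Mathlib

/-- Composition of derivations along a multi-index; the empty list gives the identity. -/
def compAlong {k R : Type*} [CommRing k] [CommRing R] [Algebra k R] {ι : Type*}
    (D : ι → Derivation k R R) (I : List ι) (f : R) : R :=
  (I.map D).foldr (fun d x => d x) f

/-- The contact order of `f` with respect to the prime ideal `P` and the family `D`. -/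
noncomputable def contactOrder {k R : Type*} [CommRing k] [CommRing R] [Algebra k R]
    (P : Ideal R) {ι : Type*} (D : ι → Derivation k R R) (f : R) : ℕ∞ :=
  sInf {n : ℕ∞ | ∃ I : List ι, (I.length : ℕ∞) = n ∧ compAlong D I f ∉ P}

section Basic
variable {k R : Type*} [CommRing k] [CommRing R] [Algebra k R] {ι : Type*}
  (D : ι → Derivation k R R)

@[simp] lemma compAlong_nil (f : R) : compAlong D [] f = f := rfl

@[simp] lemma compAlong_cons (i : ι) (I : List ι) (f : R) :
    compAlong D (i :: I) f = D i (compAlong D I f) := rfl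

lemma compAlong_append (I J : List ι) (f : R) :
    compAlong D (I ++ J) f = compAlong D I (compAlong D J f) := by
  induction I with
  | nil => rfl
  | cons i I ih => simp [ih]

lemma compAlong_add (I : List ι) (f g : R) :
    compAlong D I (f + g) = compAlong D I f + compAlong D I g := by
  induction I with
  | nil => rfl
  | cons i I ih => simp [ih]

lemma compAlong_sub (I : List ι) (f g : R) :
    compAlong D I (f - g) = compAlong D I f - compAlong D I g := by
  induction I with
  | nil => rfl
  | cons i I ih => simp [ih]

/-- all ways to split a word into a red and a blue subword. -/
def splits : List ι → List (List ι × List ι)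
  | [] => [([], [])]
  | i :: K => (splits K).flatMap fun p => [(i :: p.1, p.2), (p.1, i :: p.2)]

lemma splits_length {K : List ι} {p : List ι × List ι} (hp : p ∈ splits K) :
    p.1.length + p.2.length = K.length := by
  induction K generalizing p with
  | nil => simp [splits] at hp; simp [hp]
  | cons i K ih =>
    simp only [splits, List.mem_flatMap] at hp
    obtain ⟨q, hq, hpq⟩ := hp
    have := ih hq
    simp at hpq
    rcases hpq with h | h <;> subst h <;> simp <;> omega

lemma compAlong_mul (K : List ι) (f g : R) :
    compAlong D K (f * g) =
      ((splits K).map fun p => compAlong D p.1 f * compAlong D p.2 g).sum := by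
  induction K with
  | nil => simp [splits]
  | cons i K ih =>
    rw [compAlong_cons, ih, map_list_sum]
    simp only [splits, List.bind_eq_flatMap, List.flatMap, List.map_flatten, List.sum_flatten, List.map_map]
    congr 1
    apply List.map_congr_left
    intro p _
    simp [Derivation.leibniz, smul_eq_mul]
    ring

variable (P : Ideal R)

/-- `f` has order `≥ n`: all compositions of length `< n` land in `P`. -/
def IsOrdGE (f : R) (n : ℕ) : Prop :=
  ∀ I : List ι, I.length < n → compAlong D I f ∈ P

lemma IsOrdGE.mono {f : R} {n n' : ℕ} (h : IsOrdGE D P f n) (hle : n' ≤ n) :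
    IsOrdGE D P f n' := fun I hI => h I (lt_of_lt_of_le hI hle)

lemma IsOrdGE.zero (n : ℕ) : IsOrdGE D P (0 : R) n := by
  intro I _
  have : compAlong D I (0 : R) = 0 := by
    have := compAlong_sub D I (0 : R) 0; simpa using this
  simp [this]

lemma IsOrdGE.add {f g : R} {n : ℕ} (hf : IsOrdGE D P f n) (hg : IsOrdGE D P g n) :
    IsOrdGE D P (f + g) n := by
  intro I hI
  rw [compAlong_add]
  exact P.add_mem (hf I hI) (hg I hI)

lemma IsOrdGE.sub {f g : R} {n : ℕ} (hf : IsOrdGE D P f n) (hg : IsOrdGE D P g n) :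
    IsOrdGE D P (f - g) n := by
  intro I hI
  rw [compAlong_sub]
  exact P.sub_mem (hf I hI) (hg I hI)

/-- Order `≥ n` is stable under multiplication by arbitrary ring elements. -/
lemma IsOrdGE.mul_left {f : R} {n : ℕ} (c : R) (hf : IsOrdGE D P f n) :
    IsOrdGE D P (c * f) n := by
  intro K hK
  rw [compAlong_mul]
  apply list_sum_mem
  intro x hx
  simp only [List.mem_map] at hx
  obtain ⟨p, hp, rfl⟩ := hx
  have hlen := splits_length (ι := ι) hp
  exact P.mul_mem_left _ (hf p.2 (by omega))

/-- The sub-Leibniz estimate: product of high-order elements has high order. -/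
lemma IsOrdGE.mul {f g : R} {n m : ℕ} (hf : IsOrdGE D P f n) (hg : IsOrdGE D P g m) :
    IsOrdGE D P (f * g) (n + m) := by
  intro K hK
  rw [compAlong_mul]
  apply list_sum_mem
  intro x hx
  simp only [List.mem_map] at hx
  obtain ⟨p, hp, rfl⟩ := hx
  have hlen := splits_length (ι := ι) hp
  rcases lt_or_ge p.1.length n with h | h
  · exact P.mul_mem_right _ (hf p.1 h)
  · exact P.mul_mem_left _ (hg p.2 (by omega))

lemma compAlong_ordGE {f : R} {n : ℕ} (hf : IsOrdGE D P f n) (B : List ι) {s : ℕ}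
    (hs : s + B.length ≤ n) : IsOrdGE D P (compAlong D B f) s := by
  intro V hV
  rw [← compAlong_append]
  exact hf _ (by simp; omega)

/-- Applying an element of the span decreases the order by at most one. -/
lemma span_apply_ordGE {d : Derivation k R R}
    (hd : d ∈ Submodule.span R (Set.range D)) {f : R} {n : ℕ}
    (hf : IsOrdGE D P f (n + 1)) : IsOrdGE D P (d f) n := by
  induction hd using Submodule.span_induction generalizing f n with
  | mem x hx =>
    obtain ⟨i, rfl⟩ := hx
    intro I hI
    have : compAlong D I (D i f) = compAlong D (I ++ [i]) f := by
      rw [compAlong_append]; rfl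
    rw [this]
    exact hf _ (by simp; omega)
  | zero => simpa using IsOrdGE.zero D P n
  | add x y _ _ hx hy =>
    have : (x + y) f = x f + y f := rfl
    rw [this]
    exact (hx hf).add D P (hy hf)
  | smul c x _ hx =>
    have : (c • x) f = c * x f := rfl
    rw [this]
    exact (hx hf).mul_left D P c

/-- Reordering a minimal-length composition does not change it modulo `P`. -/
lemma perm_compAlong_sub_mem
    (hLie : ∀ d ∈ Submodule.span R (Set.range D), ∀ e ∈ Submodule.span R (Set.range D),
      ⁅d, e⁆ ∈ Submodule.span R (Set.range D))
    {f : R} {n : ℕ} (hf : IsOrdGE D P f n) :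
    ∀ {B B' : List ι}, B.Perm B' → ∀ A : List ι, A.length + B.length ≤ n →
      compAlong D (A ++ B) f - compAlong D (A ++ B') f ∈ P := by
  intro B B' hperm
  induction hperm with
  | nil => intro A _; simp
  | cons x p ih =>
    rename_i l1 l2
    intro A hlen
    rw [show A ++ x :: l1 = (A ++ [x]) ++ l1 by simp,
        show A ++ x :: l2 = (A ++ [x]) ++ l2 by simp]
    exact ih (A ++ [x]) (by simp at hlen ⊢; omega)
  | swap x y l =>
    intro A hlen
    simp only [List.length_cons] at hlen
    set h := compAlong D l f with hh
    have key : compAlong D (A ++ y :: x :: l) f - compAlong D (A ++ x :: y :: l) f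
        = compAlong D A (⁅D y, D x⁆ h) := by
      rw [compAlong_append, compAlong_append, ← compAlong_sub]
      congr 1
    rw [key]
    have hspan : ⁅D y, D x⁆ ∈ Submodule.span R (Set.range D) :=
      hLie _ (Submodule.subset_span ⟨y, rfl⟩) _ (Submodule.subset_span ⟨x, rfl⟩)
    have hh1 : IsOrdGE D P h (A.length + 2) :=
      compAlong_ordGE D P hf l (by omega)
    have hh2 : IsOrdGE D P (⁅D y, D x⁆ h) (A.length + 1) :=
      span_apply_ordGE D P hspan hh1
    exact hh2 A (by omega)
  | trans p q ihp ihq =>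
    intro A hlen
    have h1 := ihp A hlen
    have h2 := ihq A (by rwa [← p.length_eq])
    have := P.add_mem h1 h2
    convert this using 1
    ring

end Basic

section Poly
open MvPolynomial

variable {k R : Type*} [CommRing k] [CommRing R] [Algebra k R] {ι : Type*}
  [Fintype ι] [DecidableEq ι] (D : ι → Derivation k R R)

/-- Coefficientwise application of a derivation to a multivariate polynomial. -/
noncomputable def Emap (d : Derivation k R R) : MvPolynomial ι R →+ MvPolynomial ι R :=
  AddMonoidAlgebra.coeffAddEquiv.symm.toAddMonoidHom.comp
    ((Finsupp.mapRange.addMonoidHom (d : R →ₗ[k] R).toAddMonoidHom).comp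
      AddMonoidAlgebra.coeffAddEquiv.toAddMonoidHom)

lemma coeff_Emap (d : Derivation k R R) (p : MvPolynomial ι R) (α : ι →₀ ℕ) :
    coeff α (Emap d p) = d (coeff α p) := rfl

lemma Emap_monomial (d : Derivation k R R) (α : ι →₀ ℕ) (a : R) :
    Emap d (monomial α a) = monomial α (d a) := by
  ext β
  rw [coeff_Emap]
  simp only [coeff_monomial]
  split <;> simp

lemma Emap_leibniz (d : Derivation k R R) (p q : MvPolynomial ι R) :
    Emap d (p * q) = Emap d p * q + p * Emap d q := by
  ext α
  rw [coeff_add, coeff_Emap, coeff_mul, coeff_mul, coeff_mul, map_sum, ← Finset.sum_add_distrib]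
  refine Finset.sum_congr rfl fun x _ => ?_
  rw [Derivation.leibniz, coeff_Emap, coeff_Emap, smul_eq_mul, smul_eq_mul]
  ring

/-- The generic derivation `∑ i, tᵢ ∂ᵢ` acting on polynomials in `R[t]`. -/
noncomputable def Dop : MvPolynomial ι R →+ MvPolynomial ι R :=
  ∑ i, (AddMonoidHom.mulLeft (X i)).comp (Emap (D i))

lemma Dop_apply (p : MvPolynomial ι R) :
    Dop D p = ∑ i, X i * Emap (D i) p := by
  simp [Dop]

lemma Dop_leibniz (p q : MvPolynomial ι R) :
    Dop D (p * q) = Dop D p * q + p * Dop D q := by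
  rw [Dop_apply, Dop_apply, Dop_apply, Finset.sum_mul, Finset.mul_sum,
    ← Finset.sum_add_distrib]
  refine Finset.sum_congr rfl fun i _ => ?_
  rw [Emap_leibniz]
  ring

/-- Iterated Leibniz rule for an additive map satisfying the Leibniz identity. -/
lemma iterate_leibniz {A : Type*} [CommRing A] (L : A →+ A)
    (hL : ∀ p q, L (p * q) = L p * q + p * L q) (n : ℕ) (p q : A) :
    (⇑L)^[n] (p * q) =
      ∑ j ∈ Finset.range (n + 1), n.choose j • ((⇑L)^[n - j] p * (⇑L)^[j] q) := by
  open Finset in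
  induction n with
  | zero => simp [Finset.range]
  | succ n IH =>
    calc
      (⇑L)^[n + 1] (p * q) =
          L (∑ j ∈ range (n + 1), n.choose j • ((⇑L)^[n - j] p * (⇑L)^[j] q)) := by
        rw [Function.iterate_succ_apply', IH]
      _ = (∑ j ∈ range (n + 1), n.choose j • ((⇑L)^[n - j + 1] p * (⇑L)^[j] q)) +
          ∑ j ∈ range (n + 1), n.choose j • ((⇑L)^[n - j] p * (⇑L)^[j + 1] q) := by
        rw [map_sum]
        simp_rw [AddMonoidHom.map_nsmul, hL, Function.iterate_succ_apply',
          smul_add, Finset.sum_add_distrib]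
      _ = (∑ j ∈ range (n + 1), n.choose (j + 1) • ((⇑L)^[n - j] p * (⇑L)^[j + 1] q)) +
              1 • ((⇑L)^[n + 1] p * (⇑L)^[0] q) +
            ∑ j ∈ range (n + 1), n.choose j • ((⇑L)^[n - j] p * (⇑L)^[j + 1] q) := ?_
      _ = ((∑ j ∈ range (n + 1), n.choose j • ((⇑L)^[n - j] p * (⇑L)^[j + 1] q)) +
              ∑ j ∈ range (n + 1), n.choose (j + 1) • ((⇑L)^[n - j] p * (⇑L)^[j + 1] q)) +
            1 • ((⇑L)^[n + 1] p * (⇑L)^[0] q) := by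
        rw [add_comm, add_assoc]
      _ = (∑ i ∈ range (n + 1),
              (n + 1).choose (i + 1) • ((⇑L)^[n + 1 - (i + 1)] p * (⇑L)^[i + 1] q)) +
            1 • ((⇑L)^[n + 1] p * (⇑L)^[0] q) := by
        simp_rw [Nat.choose_succ_succ, Nat.succ_sub_succ, add_smul, Finset.sum_add_distrib]
      _ = ∑ j ∈ range (n + 1 + 1),
            (n + 1).choose j • ((⇑L)^[n + 1 - j] p * (⇑L)^[j] q) := by
        rw [Finset.sum_range_succ' _ (n + 1), Nat.choose_zero_right, tsub_zero]
    congr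
    refine (Finset.sum_range_succ' _ _).trans (congr_arg₂ (· + ·) ?_ ?_)
    · rw [Finset.sum_range_succ, Nat.choose_succ_self, zero_smul, add_zero]
      refine Finset.sum_congr rfl fun j hj => ?_
      rw [Finset.mem_range] at hj
      have : n - (j + 1) + 1 = n - j := by omega
      rw [this]
    · simp

/-- The exponent (content) of a word. -/
noncomputable def cntL (L : List ι) : ι →₀ ℕ := (L.map fun x => Finsupp.single x 1).sum

@[simp] lemma cntL_nil : cntL ([] : List ι) = 0 := rfl

@[simp] lemma cntL_cons (i : ι) (L : List ι) :
    cntL (i :: L) = Finsupp.single i 1 + cntL L := by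
  simp [cntL]

lemma cntL_apply (L : List ι) (x : ι) : cntL L x = L.count x := by
  induction L with
  | nil => simp
  | cons a L ih =>
    rw [cntL_cons, Finsupp.add_apply, ih, List.count_cons, Finsupp.single_apply]
    by_cases h : a = x
    · subst h; simp; omega
    · simp [h, Ne.symm h]

lemma cntL_eq_iff_perm {L L' : List ι} : cntL L = cntL L' ↔ L.Perm L' := by
  rw [List.perm_iff_count]
  constructor
  · intro h a
    have := congrFun (congrArg (fun f : ι →₀ ℕ => (f : ι → ℕ)) h) a
    simpa [cntL_apply] using this
  · intro h
    ext a
    simp [cntL_apply, h a]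

lemma Dop_monomial (α : ι →₀ ℕ) (a : R) :
    Dop D (monomial α a) = ∑ i, monomial (Finsupp.single i 1 + α) (D i a) := by
  rw [Dop_apply]
  refine Finset.sum_congr rfl fun i _ => ?_
  rw [Emap_monomial, X, monomial_mul, one_mul]

lemma Dop_iterate_C (f : R) (n : ℕ) :
    (⇑(Dop D))^[n] (MvPolynomial.C f) =
      ∑ K : Fin n → ι, monomial (cntL (List.ofFn K)) (compAlong D (List.ofFn K) f) := by
  induction n with
  | zero =>
    rw [Function.iterate_zero_apply, Fintype.sum_unique, List.ofFn_zero, cntL_nil,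
      compAlong_nil, MvPolynomial.C_apply]
  | succ n ih =>
    rw [Function.iterate_succ_apply', ih, map_sum]
    simp_rw [Dop_monomial]
    rw [← Fintype.sum_prod_type']
    refine Fintype.sum_equiv ((Equiv.prodComm _ _).trans (Fin.consEquiv fun _ => ι))
      _ _ fun x => ?_
    have he : ((Equiv.prodComm (Fin n → ι) ι).trans (Fin.consEquiv fun _ => ι)) x
        = Fin.cons x.2 x.1 := rfl
    rw [he]
    have hofn : List.ofFn (Fin.cons x.2 x.1 : Fin (n+1) → ι) = x.2 :: List.ofFn x.1 := by
      rw [List.ofFn_succ]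
      simp
    rw [hofn, cntL_cons, compAlong_cons]

end Poly

section Quot
open MvPolynomial

variable {k R : Type*} [Field k] [CharZero k] [CommRing R] [Algebra k R] {ι : Type*}
  [Fintype ι] [DecidableEq ι] (D : ι → Derivation k R R) (P : Ideal R)

/-- The generating polynomial of order `j`, reduced mod `P`. -/
noncomputable def Phi (j : ℕ) (f : R) : MvPolynomial ι (R ⧸ P) :=
  MvPolynomial.map (Ideal.Quotient.mk P) ((⇑(Dop D))^[j] (MvPolynomial.C f))

lemma Phi_eq (j : ℕ) (f : R) :
    Phi D P j f = ∑ K : Fin j → ι,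
      monomial (cntL (List.ofFn K)) (Ideal.Quotient.mk P (compAlong D (List.ofFn K) f)) := by
  rw [Phi, Dop_iterate_C, map_sum]
  simp [MvPolynomial.map_monomial]

lemma Phi_eq_zero {f : R} {n : ℕ} (hf : IsOrdGE D P f n) {j : ℕ} (hj : j < n) :
    Phi D P j f = 0 := by
  rw [Phi_eq]
  apply Finset.sum_eq_zero
  intro K _
  have : compAlong D (List.ofFn K) f ∈ P := hf _ (by simp [hj])
  rw [Ideal.Quotient.eq_zero_iff_mem.2 this, map_zero]

lemma exists_word_of_Phi_ne_zero {h : R} {N : ℕ} (hne : Phi D P N h ≠ 0) :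
    ∃ K : List ι, K.length = N ∧ compAlong D K h ∉ P := by
  by_contra hno
  push_neg at hno
  apply hne
  rw [Phi_eq]
  apply Finset.sum_eq_zero
  intro K _
  rw [Ideal.Quotient.eq_zero_iff_mem.2 (hno (List.ofFn K) (by simp)), map_zero]

lemma Phi_ne_zero [Nontrivial (R ⧸ P)] [NoZeroDivisors (R ⧸ P)]
    (hLie : ∀ d ∈ Submodule.span R (Set.range D), ∀ e ∈ Submodule.span R (Set.range D),
      ⁅d, e⁆ ∈ Submodule.span R (Set.range D))
    {f : R} {n : ℕ} (hf : IsOrdGE D P f n) {I₀ : List ι} (hlen : I₀.length = n)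
    (hI₀ : compAlong D I₀ f ∉ P) : Phi D P n f ≠ 0 := by
  haveI : CharZero (R ⧸ P) :=
    charZero_of_injective_algebraMap (algebraMap k (R ⧸ P)).injective
  set π := Ideal.Quotient.mk P
  intro hzero
  have hcoeff := congrArg (coeff (cntL I₀)) hzero
  rw [Phi_eq, coeff_zero] at hcoeff
  rw [MvPolynomial.coeff_sum] at hcoeff
  simp only [coeff_monomial] at hcoeff
  -- every word with the right content contributes π (compAlong D I₀ f)
  have hterm : ∀ K : Fin n → ι, cntL (List.ofFn K) = cntL I₀ →
      π (compAlong D (List.ofFn K) f) = π (compAlong D I₀ f) := by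
    intro K hK
    have hperm : (List.ofFn K).Perm I₀ := cntL_eq_iff_perm.1 hK
    have := perm_compAlong_sub_mem D P hLie hf hperm []
      (by simp [hlen])
    simp only [List.nil_append] at this
    exact (Ideal.Quotient.mk_eq_mk_iff_sub_mem _ _).2 this
  rw [Finset.sum_congr rfl (fun K _ => show _ = if cntL (List.ofFn K) = cntL I₀
      then π (compAlong D I₀ f) else 0 by
    split_ifs with hK
    · exact hterm K hK
    · rfl)] at hcoeff
  rw [← Finset.sum_filter, Finset.sum_const, nsmul_eq_mul] at hcoeff
  set K₀ : Fin n → ι := fun j => I₀.get (Fin.cast hlen.symm j) with hK₀def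
  have hof : List.ofFn K₀ = I₀ := by
    apply List.ext_getElem (by simp [hlen])
    intro i h1 h2
    simp [hK₀def]
  have hmem : K₀ ∈ Finset.univ.filter fun K : Fin n → ι =>
      cntL (List.ofFn K) = cntL I₀ := by
    simp [hof]
  have hcard : ((Finset.univ.filter fun K : Fin n → ι =>
      cntL (List.ofFn K) = cntL I₀).card : R ⧸ P) ≠ 0 := by
    rw [Nat.cast_ne_zero]
    intro hc
    rw [Finset.card_eq_zero] at hc
    rw [hc] at hmem
    exact absurd hmem (Finset.notMem_empty _)
  have hx : π (compAlong D I₀ f) ≠ 0 := fun hx => hI₀ (Ideal.Quotient.eq_zero_iff_mem.1 hx)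
  exact (mul_ne_zero hcard hx) hcoeff

lemma Phi_mul (N : ℕ) (f g : R) :
    Phi D P N (f * g) = ∑ j ∈ Finset.range (N + 1),
      N.choose j • (Phi D P (N - j) f * Phi D P j g) := by
  have : (MvPolynomial.C (f * g) : MvPolynomial ι R) =
      MvPolynomial.C f * MvPolynomial.C g := by rw [map_mul]
  rw [Phi, this, iterate_leibniz (Dop D) (Dop_leibniz D), map_sum]
  refine Finset.sum_congr rfl fun j _ => ?_
  rw [map_nsmul, map_mul]
  rfl

/-- The key nonvanishing statement. -/
lemma Phi_mul_ne_zero (hP : P.IsPrime)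
    (hLie : ∀ d ∈ Submodule.span R (Set.range D), ∀ e ∈ Submodule.span R (Set.range D),
      ⁅d, e⁆ ∈ Submodule.span R (Set.range D))
    {f g : R} {n m : ℕ} (hfo : IsOrdGE D P f n) (hgo : IsOrdGE D P g m)
    {I₀ J₀ : List ι} (hlenI : I₀.length = n) (hI₀ : compAlong D I₀ f ∉ P)
    (hlenJ : J₀.length = m) (hJ₀ : compAlong D J₀ g ∉ P) :
    Phi D P (n + m) (f * g) ≠ 0 := by
  haveI := hP
  haveI : CharZero (R ⧸ P) :=
    charZero_of_injective_algebraMap (algebraMap k (R ⧸ P)).injective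
  rw [Phi_mul]
  rw [Finset.sum_eq_single m]
  · have h1 : Phi D P (n + m - m) f ≠ 0 := by
      rw [Nat.add_sub_cancel]
      exact Phi_ne_zero D P hLie hfo hlenI hI₀
    have h2 : Phi D P m g ≠ 0 := Phi_ne_zero D P hLie hgo hlenJ hJ₀
    have hc : ((n + m).choose m : MvPolynomial ι (R ⧸ P)) ≠ 0 := by
      rw [Nat.cast_ne_zero]
      exact Nat.ne_of_gt (Nat.choose_pos (by omega))
    rw [nsmul_eq_mul]
    exact mul_ne_zero hc (mul_ne_zero h1 h2)
  · intro j hj hjm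
    rw [Finset.mem_range] at hj
    rcases lt_or_gt_of_ne hjm with h | h
    · rw [Phi_eq_zero D P hgo h, mul_zero, smul_zero]
    · rw [Phi_eq_zero D P hfo (by omega), zero_mul, smul_zero]
  · intro h
    exact absurd (Finset.mem_range.2 (by omega)) h

end Quot

section Main

variable {k R : Type*} [CommRing k] [CommRing R] [Algebra k R] {ι : Type*}
  (D : ι → Derivation k R R) (P : Ideal R)

lemma contactOrder_ordGE {f : R} {n : ℕ} (hf : contactOrder P D f = (n : ℕ∞)) :
    IsOrdGE D P f n := by
  intro I hI
  by_contra h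
  have hmem : ((I.length : ℕ∞)) ∈
      {c : ℕ∞ | ∃ J : List ι, (J.length : ℕ∞) = c ∧ compAlong D J f ∉ P} := ⟨I, rfl, h⟩
  have := sInf_le hmem
  rw [contactOrder] at hf
  rw [hf] at this
  exact absurd this (by exact_mod_cast Nat.not_le.2 hI)

lemma contactOrder_witness {f : R} {n : ℕ} (hf : contactOrder P D f = (n : ℕ∞)) :
    ∃ I : List ι, I.length = n ∧ compAlong D I f ∉ P := by
  by_contra hno
  push_neg at hno
  have hord := contactOrder_ordGE D P hf
  have : ((n : ℕ) + 1 : ℕ∞) ≤ contactOrder P D f := by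
    apply le_sInf
    rintro b ⟨I, rfl, hI⟩
    have h1 : ¬ I.length < n := fun hlt => hI (hord I hlt)
    have h2 : I.length ≠ n := fun he => hI (hno I he)
    exact_mod_cast Nat.succ_le_of_lt (by omega)
  rw [hf] at this
  exact absurd this (by exact_mod_cast Nat.not_succ_le_self n)

lemma contactOrder_eq_of {h : R} {N : ℕ} (hord : IsOrdGE D P h N)
    (I : List ι) (hlen : I.length = N) (hI : compAlong D I h ∉ P) :
    contactOrder P D h = (N : ℕ∞) := by
  apply le_antisymm
  · exact sInf_le ⟨I, by rw [hlen], hI⟩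
  · apply le_sInf
    rintro b ⟨J, rfl, hJ⟩
    have : ¬ J.length < N := fun hlt => hJ (hord J hlt)
    exact_mod_cast Nat.le_of_not_lt this

end Main

/-- Multiplicativity of the contact order with respect to a prime ideal:
if `ord f = n < ∞` and `ord g = m < ∞` then `ord (fg) = n + m`. -/
theorem stmt_7 {k : Type*} [Field k] [CharZero k] {R : Type*} [CommRing R]
    [Algebra k R] (P : Ideal R) (hP : P.IsPrime) {r : ℕ}
    (D : Fin r → Derivation k R R)
    (hLie : ∀ d ∈ Submodule.span R (Set.range D), ∀ e ∈ Submodule.span R (Set.range D),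
      ⁅d, e⁆ ∈ Submodule.span R (Set.range D))
    (f g : R) (n m : ℕ)
    (hf : contactOrder P D f = (n : ℕ∞)) (hg : contactOrder P D g = (m : ℕ∞)) :
    contactOrder P D (f * g) = ((n + m : ℕ) : ℕ∞) := by
  have hfo := contactOrder_ordGE D P hf
  have hgo := contactOrder_ordGE D P hg
  obtain ⟨I₀, hlenI, hI₀⟩ := contactOrder_witness D P hf
  obtain ⟨J₀, hlenJ, hJ₀⟩ := contactOrder_witness D P hg
  have hne := Phi_mul_ne_zero D P hP hLie hfo hgo hlenI hI₀ hlenJ hJ₀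
  obtain ⟨K, hKlen, hK⟩ := exists_word_of_Phi_ne_zero D P hne
  exact contactOrder_eq_of D P (hfo.mul D P hgo) K hKlen hK
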